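/- Let C be a convex subset of a finite-dimensional real inner product space A, U ⊆ A a subspace with orthogonal projection π, and suppose π(C) is not a singleton. An exposed face F of C is the pre-image under π|_C of an exposed face of π(C) if and only if F is the greatest element, under inclusion, of the set {G exposed face of C | N_C(G) ∩ U = N_C(F) ∩ U}, where N_C denotes the normal cone. -/

import Mathlib

open RealInnerProductSpace

/-- An exposed face of a convex set `D`: either `∅` or the set of minimizers of
`x ↦ ⟪x, a⟫` on `D` for some vector `a`. -/
def IsExpFace {E : Type*} [NormedAddCommGroup E] [InnerProductSpace ℝ E]
    (D F : Set E) : Prop :=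
  F = ∅ ∨ ∃ a : E, F = {x ∈ D | ∀ y ∈ D, ⟪x, a⟫ ≤ ⟪y, a⟫}

/-- The normal cone of `C` at a convex subset `X ⊆ C`: the (inward) normal vectors of `C`
at the points of the relative interior (intrinsic interior) of `X`.  For nonempty convex
`X` this is the normal cone `N_C(x)` at any relative interior point `x` of `X`, and for
`X = ∅` it is the whole space, matching the convention `N_C(∅) = A`. -/
def normalCone {E : Type*} [NormedAddCommGroup E] [InnerProductSpace ℝ E]
    (C X : Set E) : Set E :=
  {u | ∀ x ∈ intrinsicInterior ℝ X, ∀ y ∈ C, 0 ≤ ⟪y - x, u⟫}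

section Aux

open Set

variable {E : Type*} [NormedAddCommGroup E] [InnerProductSpace ℝ E]

/-- A point of the intrinsic interior of `X` lies strictly between any point of `X`
and some other point of `X`. -/
lemma stretch_aux {X : Set E} {x₀ x : E} (h₀ : x₀ ∈ intrinsicInterior ℝ X) (hx : x ∈ X) :
    ∃ y ∈ X, ∃ s : ℝ, 0 < s ∧ s < 1 ∧ x₀ = x + s • (y - x) := by
  rw [mem_intrinsicInterior] at h₀
  obtain ⟨y₀, hy₀, hy₀x⟩ := h₀
  have hxA : x ∈ affineSpan ℝ X := subset_affineSpan ℝ X hx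
  have hx₀A : x₀ ∈ affineSpan ℝ X := hy₀x ▸ y₀.2
  have hmem : ∀ t : ℝ, x + t • (x₀ - x) ∈ affineSpan ℝ X := by
    intro t
    have := (affineSpan ℝ X).smul_vsub_vadd_mem t hx₀A hxA hxA
    simpa [vsub_eq_sub, vadd_eq_add, add_comm] using this
  set g : ℝ → affineSpan ℝ X := fun t => ⟨x + t • (x₀ - x), hmem t⟩ with hg
  have hgc : Continuous g := by
    apply Continuous.subtype_mk
    exact continuous_const.add (continuous_id.smul continuous_const)
  have hg1 : g 1 = y₀ := by
    apply Subtype.ext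
    simp [hg, ← hy₀x]
  have hopen : IsOpen (g ⁻¹' interior ((↑) ⁻¹' X : Set (affineSpan ℝ X))) :=
    isOpen_interior.preimage hgc
  have h1mem : (1 : ℝ) ∈ g ⁻¹' interior ((↑) ⁻¹' X : Set (affineSpan ℝ X)) := by
    simp only [Set.mem_preimage, hg1]; exact hy₀
  obtain ⟨ε, hε, hball⟩ := Metric.isOpen_iff.1 hopen 1 h1mem
  set t : ℝ := 1 + ε / 2 with ht
  have htmem : t ∈ g ⁻¹' interior ((↑) ⁻¹' X : Set (affineSpan ℝ X)) := by
    apply hball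
    rw [Metric.mem_ball, Real.dist_eq]
    rw [ht]; rw [show (1 : ℝ) + ε / 2 - 1 = ε / 2 by ring, abs_of_pos (by linarith)]
    linarith
  have hyX : x + t • (x₀ - x) ∈ X := by
    have := interior_subset htmem
    simpa using this
  have ht1 : (1 : ℝ) < t := by rw [ht]; linarith
  have ht0 : (0 : ℝ) < t := by linarith
  refine ⟨x + t • (x₀ - x), hyX, 1 / t, by positivity, by
    rw [div_lt_one ht0]; exact ht1, ?_⟩
  have : (1 / t) • (x + t • (x₀ - x) - x) = x₀ - x := by
    rw [add_sub_cancel_left, smul_smul, one_div_mul_cancel (ne_of_gt ht0), one_smul]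
  rw [this]; abel

lemma isExpFace_subset {C G : Set E} (h : IsExpFace C G) : G ⊆ C := by
  rcases h with rfl | ⟨a, rfl⟩
  · exact empty_subset _
  · exact fun x hx => hx.1

lemma isExpFace_convex {C G : Set E} (hC : Convex ℝ C) (h : IsExpFace C G) : Convex ℝ G := by
  rcases h with rfl | ⟨a, rfl⟩
  · exact convex_empty
  · intro x hx y hy p q hp hq hpq
    refine ⟨hC hx.1 hy.1 hp hq hpq, fun z hz => ?_⟩
    have h1 := hx.2 z hz
    have h2 := hy.2 z hz
    rw [inner_add_left, real_inner_smul_left, real_inner_smul_left]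
    have e1 := mul_le_mul_of_nonneg_left h1 hp
    have e2 := mul_le_mul_of_nonneg_left h2 hq
    have e3 : p * ⟪z, a⟫ + q * ⟪z, a⟫ = ⟪z, a⟫ := by rw [← add_mul, hpq, one_mul]
    linarith

lemma normalCone_convex (C X : Set E) : Convex ℝ (normalCone C X) := by
  intro u hu v hv p q hp hq hpq x hx y hy
  have h1 := hu x hx y hy
  have h2 := hv x hx y hy
  rw [inner_add_right, real_inner_smul_right, real_inner_smul_right]
  positivity

lemma zero_mem_normalCone (C X : Set E) : (0 : E) ∈ normalCone C X := by
  intro x hx y hy; simp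

/-- For a nonempty convex subset `X ⊆ C`, membership in the normal cone is equivalent to
every point of `X` minimizing `⟪·, u⟫` over `C`. -/
lemma mem_normalCone_iff [FiniteDimensional ℝ E] {C X : Set E} (hXC : X ⊆ C)
    (hXc : Convex ℝ X) (hXne : X.Nonempty) {u : E} :
    u ∈ normalCone C X ↔ ∀ x ∈ X, ∀ y ∈ C, ⟪x, u⟫ ≤ ⟪y, u⟫ := by
  constructor
  · intro hu x hx y hy
    obtain ⟨x₀, hx₀⟩ := hXne.intrinsicInterior hXc
    obtain ⟨z, hz, s, hs0, hs1, hxz⟩ := stretch_aux hx₀ hx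
    have h1 : ⟪x₀, u⟫ ≤ ⟪x, u⟫ := by
      have := hu x₀ hx₀ x (hXC hx); rw [inner_sub_left] at this; linarith
    have h2 : ⟪x₀, u⟫ ≤ ⟪z, u⟫ := by
      have := hu x₀ hx₀ z (hXC hz); rw [inner_sub_left] at this; linarith
    have h3 : ⟪x₀, u⟫ = ⟪x, u⟫ + s * (⟪z, u⟫ - ⟪x, u⟫) := by
      rw [hxz, inner_add_left, real_inner_smul_left, inner_sub_left]
    have hxu : ⟪x, u⟫ ≤ ⟪x₀, u⟫ := by nlinarith
    have h4 : ⟪x₀, u⟫ ≤ ⟪y, u⟫ := by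
      have := hu x₀ hx₀ y hy; rw [inner_sub_left] at this; linarith
    linarith
  · intro hu x hx y hy
    rw [inner_sub_left]
    have := hu x (intrinsicInterior_subset hx) y hy
    linarith

end Aux

/-- Let `C` be convex in a finite-dimensional real inner product space,
`U` a subspace with orthogonal projection `π`, and suppose `π(C)` is not a singleton.
An exposed face `F` of `C` is the pre-image under `π|_C` of an exposed face of `π(C)`
if and only if `F` is the greatest element, under inclusion, of
`{G exposed face of C | N_C(G) ∩ U = N_C(F) ∩ U}`. -/
theorem stmt2 {E : Type*} [NormedAddCommGroup E] [InnerProductSpace ℝ E]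
    [FiniteDimensional ℝ E]
    (C : Set E) (hC : Convex ℝ C) (U : Submodule ℝ E)
    (π : E → E) (hπ : ∀ x, π x = (U.orthogonalProjection x : E))
    (hns : ¬ ∃ z : E, π '' C = {z})
    (F : Set E) (hF : IsExpFace C F) :
    (∃ G, IsExpFace (π '' C) G ∧ F = C ∩ π ⁻¹' G) ↔
      IsGreatest {G | IsExpFace C G ∧
        normalCone C G ∩ (U : Set E) = normalCone C F ∩ (U : Set E)} F := by
  classical
  have hπself : ∀ b ∈ U, ∀ z : E, ⟪π z, b⟫ = ⟪z, b⟫ := by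
    intro b hb z
    rw [hπ, ← Submodule.starProjection_apply, Submodule.inner_starProjection_left_eq_right,
      Submodule.starProjection_eq_self_iff.2 hb]
  have hπadj : ∀ z w : E, ⟪π z, w⟫ = ⟪z, π w⟫ := by
    intro z w; rw [hπ, hπ, ← Submodule.starProjection_apply, ← Submodule.starProjection_apply,
      Submodule.inner_starProjection_left_eq_right]
  have hπU : ∀ z, π z ∈ U := fun z => by rw [hπ]; exact (U.orthogonalProjectionOnto z).2
  have hsing : ∀ x₀ ∈ C, (∀ u ∈ U, ∀ y ∈ C, ⟪y - x₀, u⟫ = 0) → False := by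
    intro x₀ hx₀ h
    apply hns
    refine ⟨π x₀, ?_⟩
    ext p
    constructor
    · rintro ⟨y, hy, rfl⟩
      have hyU : y - x₀ ∈ Uᗮ := by
        rw [Submodule.mem_orthogonal]
        intro u hu
        rw [real_inner_comm]
        exact h u hu y hy
      have h0 : U.orthogonalProjectionOnto (y - x₀) = 0 :=
        Submodule.orthogonalProjectionOnto_apply_of_mem_orthogonal hyU
      rw [map_sub, sub_eq_zero] at h0
      have : π y = π x₀ := by rw [hπ, hπ, h0]
      simp [this]
    · rintro rfl
      exact ⟨x₀, hx₀, rfl⟩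
  by_cases hFe : F = ∅
  · subst hFe
    constructor
    · intro _
      constructor
      · exact ⟨hF, rfl⟩
      · intro G hG x hx
        exfalso
        obtain ⟨hGexp, hGN⟩ := hG
        have hGC : G ⊆ C := isExpFace_subset hGexp
        have hGc : Convex ℝ G := isExpFace_convex hC hGexp
        obtain ⟨x₀, hx₀⟩ := (Set.nonempty_of_mem hx).intrinsicInterior hGc
        have hUsub : (U : Set E) ⊆ normalCone C G := by
          intro v hv
          have : v ∈ normalCone C G ∩ (U : Set E) := by
            rw [hGN]
            refine ⟨fun x hxe => ?_, hv⟩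
            rw [intrinsicInterior_empty] at hxe
            exact absurd hxe (Set.notMem_empty x)
          exact this.1
        apply hsing x₀ (hGC (intrinsicInterior_subset hx₀))
        intro u hu y hy
        have h1 := hUsub hu x₀ hx₀ y hy
        have h2 := hUsub (U.neg_mem hu) x₀ hx₀ y hy
        rw [inner_neg_right] at h2
        linarith
    · intro _
      exact ⟨∅, Or.inl rfl, by simp⟩
  · have hFne : F.Nonempty := Set.nonempty_iff_ne_empty.2 hFe
    have hFC : F ⊆ C := isExpFace_subset hF
    have hFc : Convex ℝ F := isExpFace_convex hC hF
    set P : Prop := ∃ b ∈ (U : Set E), F = {x ∈ C | ∀ y ∈ C, ⟪x, b⟫ ≤ ⟪y, b⟫} with hPdef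
    have hPtoLHS : P → ∃ G, IsExpFace (π '' C) G ∧ F = C ∩ π ⁻¹' G := by
      rintro ⟨b, hb, hFb⟩
      refine ⟨{p ∈ π '' C | ∀ q ∈ π '' C, ⟪p, b⟫ ≤ ⟪q, b⟫}, Or.inr ⟨b, rfl⟩, ?_⟩
      ext x
      constructor
      · intro hxF
        rw [hFb] at hxF
        refine ⟨hxF.1, ⟨⟨x, hxF.1, rfl⟩, ?_⟩⟩
        rintro q ⟨y, hy, rfl⟩
        rw [hπself b hb x, hπself b hb y]
        exact hxF.2 y hy
      · rintro ⟨hxC, -, hmin⟩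
        rw [hFb]
        refine ⟨hxC, fun y hy => ?_⟩
        have := hmin (π y) ⟨y, hy, rfl⟩
        rw [hπself b hb x, hπself b hb y] at this
        exact this
    have hLHStoP : (∃ G, IsExpFace (π '' C) G ∧ F = C ∩ π ⁻¹' G) → P := by
      rintro ⟨G, hGexp, hFG⟩
      rcases hGexp with rfl | ⟨a', rfl⟩
      · exfalso
        apply hFe
        rw [hFG]
        simp
      · refine ⟨π a', hπU a', ?_⟩
        ext x
        constructor
        · intro hxF
          have hx : x ∈ C ∩ π ⁻¹' _ := hFG ▸ hxF
          obtain ⟨hxC, hxg⟩ := hx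
          refine ⟨hxC, fun y hy => ?_⟩
          have := hxg.2 (π y) ⟨y, hy, rfl⟩
          rw [← hπadj x a', ← hπadj y a']
          exact this
        · intro hxm
          rw [hFG]
          refine ⟨hxm.1, ⟨⟨x, hxm.1, rfl⟩, ?_⟩⟩
          rintro q ⟨y, hy, rfl⟩
          rw [hπadj x a', hπadj y a']
          exact hxm.2 y hy
    have hPtoRHS : P → IsGreatest {G | IsExpFace C G ∧
        normalCone C G ∩ (U : Set E) = normalCone C F ∩ (U : Set E)} F := by
      rintro ⟨b, hb, hFb⟩
      constructor
      · exact ⟨hF, rfl⟩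
      · intro G hG
        obtain ⟨hGexp, hGN⟩ := hG
        rcases G.eq_empty_or_nonempty with rfl | hGne
        · exact Set.empty_subset F
        have hGC := isExpFace_subset hGexp
        have hGc := isExpFace_convex hC hGexp
        have hbF : b ∈ normalCone C F := by
          rw [mem_normalCone_iff hFC hFc hFne]
          intro x hx y hy
          rw [hFb] at hx
          exact hx.2 y hy
        have hbG : b ∈ normalCone C G := by
          have : b ∈ normalCone C G ∩ (U : Set E) := by
            rw [hGN]; exact ⟨hbF, hb⟩
          exact this.1
        rw [mem_normalCone_iff hGC hGc hGne] at hbG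
        intro x hx
        rw [hFb]
        exact ⟨hGC hx, fun y hy => hbG x hx y hy⟩
    have hRHStoP : IsGreatest {G | IsExpFace C G ∧
        normalCone C G ∩ (U : Set E) = normalCone C F ∩ (U : Set E)} F → P := by
      intro hG
      have hKc : Convex ℝ (normalCone C F ∩ (U : Set E)) :=
        (normalCone_convex C F).inter U.convex
      have hKne : (normalCone C F ∩ (U : Set E)).Nonempty :=
        ⟨0, zero_mem_normalCone C F, U.zero_mem⟩
      obtain ⟨b, hbK⟩ := hKne.intrinsicInterior hKc
      have hbK' : b ∈ normalCone C F ∩ (U : Set E) := intrinsicInterior_subset hbK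
      have hbmin : ∀ x ∈ F, ∀ y ∈ C, ⟪x, b⟫ ≤ ⟪y, b⟫ :=
        (mem_normalCone_iff hFC hFc hFne).1 hbK'.1
      refine ⟨b, hbK'.2, ?_⟩
      have hFsub : F ⊆ {x ∈ C | ∀ y ∈ C, ⟪x, b⟫ ≤ ⟪y, b⟫} :=
        fun x hx => ⟨hFC hx, fun y hy => hbmin x hx y hy⟩
      have hFbexp : IsExpFace C {x ∈ C | ∀ y ∈ C, ⟪x, b⟫ ≤ ⟪y, b⟫} := Or.inr ⟨b, rfl⟩
      have hFbC : {x ∈ C | ∀ y ∈ C, ⟪x, b⟫ ≤ ⟪y, b⟫} ⊆ C := fun x hx => hx.1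
      have hFbc := isExpFace_convex hC hFbexp
      have hFbne : ({x ∈ C | ∀ y ∈ C, ⟪x, b⟫ ≤ ⟪y, b⟫} : Set E).Nonempty := hFne.mono hFsub
      have hNeq : normalCone C {x ∈ C | ∀ y ∈ C, ⟪x, b⟫ ≤ ⟪y, b⟫} ∩ (U : Set E) =
          normalCone C F ∩ (U : Set E) := by
        apply Set.Subset.antisymm
        · rintro u ⟨huN, huU⟩
          refine ⟨?_, huU⟩
          rw [mem_normalCone_iff hFC hFc hFne]
          intro x hx y hy
          exact (mem_normalCone_iff hFbC hFbc hFbne).1 huN x (hFsub hx) y hy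
        · rintro u huK
          refine ⟨?_, huK.2⟩
          rw [mem_normalCone_iff hFbC hFbc hFbne]
          obtain ⟨x₀, hx₀F⟩ := id hFne
          obtain ⟨z, hzK, s, hs0, hs1, hbz⟩ := stretch_aux hbK huK
          have hzmin : ∀ x ∈ F, ∀ y ∈ C, ⟪x, z⟫ ≤ ⟪y, z⟫ :=
            (mem_normalCone_iff hFC hFc hFne).1 hzK.1
          have humin : ∀ x ∈ F, ∀ y ∈ C, ⟪x, u⟫ ≤ ⟪y, u⟫ :=
            (mem_normalCone_iff hFC hFc hFne).1 huK.1
          intro x hx y hy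
          have hxb : ⟪x, b⟫ = ⟪x₀, b⟫ :=
            le_antisymm (hx.2 x₀ (hFC hx₀F)) (hbmin x₀ hx₀F x hx.1)
          have hxz : ⟪x₀, z⟫ ≤ ⟪x, z⟫ := hzmin x₀ hx₀F x hx.1
          have hb1 : ⟪x, b⟫ = ⟪x, u⟫ + s * (⟪x, z⟫ - ⟪x, u⟫) := by
            rw [hbz, inner_add_right, real_inner_smul_right, inner_sub_right]
          have hb2 : ⟪x₀, b⟫ = ⟪x₀, u⟫ + s * (⟪x₀, z⟫ - ⟪x₀, u⟫) := by
            rw [hbz, inner_add_right, real_inner_smul_right, inner_sub_right]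
          have key : (1 - s) * ⟪x, u⟫ ≤ (1 - s) * ⟪x₀, u⟫ := by
            have := mul_le_mul_of_nonneg_left hxz hs0.le
            nlinarith
          have hxu : ⟪x, u⟫ ≤ ⟪x₀, u⟫ :=
            le_of_mul_le_mul_left key (by linarith)
          have := humin x₀ hx₀F y hy
          linarith
      have hsub2 : {x ∈ C | ∀ y ∈ C, ⟪x, b⟫ ≤ ⟪y, b⟫} ⊆ F := hG.2 ⟨hFbexp, hNeq⟩
      exact Set.Subset.antisymm hFsub hsub2
    exact ⟨fun h => hPtoRHS (hLHStoP h), fun h => hPtoLHS (hRHStoP h)⟩
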